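/- Let P be a contraction on a Hilbert space H with defect operator D_P = (I - P*P)^{1/2}, and let Y be a bounded operator satisfying Y·D_P + Y*·D_P·P = 0. Then D_P·Y·D_P = 0. -/

import Mathlib

open ContinuousLinearMap
open scoped InnerProductSpace

theorem stmt_6 {H : Type*} [NormedAddCommGroup H] [InnerProductSpace ℂ H] [CompleteSpace H]
    (P D Y : H →L[ℂ] H) (hP : ‖P‖ ≤ 1)
    (hDpos : D.IsPositive) (hD : D * D = 1 - adjoint P * P)
    (hY : Y * D + adjoint Y * D * P = 0) :
    D * Y * D = 0 := by
  have hDsa : adjoint D = D := hDpos.isSelfAdjoint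
  have hYD : Y * D = -(adjoint Y * D * P) := eq_neg_of_add_eq_zero_left hY
  have hDY : D * adjoint Y = -(adjoint P * D * Y) := by
    have := congrArg star hY
    simp only [star_add, star_mul, star_zero, star_neg, star_eq_adjoint, hDsa,
      adjoint_adjoint] at this
    exact eq_neg_of_add_eq_zero_left this
  have key : D * Y * D = adjoint P * (D * Y * D) * P := by
    calc D * Y * D = D * (Y * D) := by rw [mul_assoc]
      _ = D * (-(adjoint Y * D * P)) := by rw [hYD]
      _ = -(D * adjoint Y) * (D * P) := by noncomm_ring
      _ = -(-(adjoint P * D * Y)) * (D * P) := by rw [hDY]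
      _ = adjoint P * (D * Y * D) * P := by noncomm_ring
  have keyn : ∀ n : ℕ, D * Y * D = (adjoint P)^n * (D * Y * D) * P^n := by
    intro n
    induction n with
    | zero => simp
    | succ n ih =>
      calc D * Y * D = (adjoint P)^n * (D * Y * D) * P^n := ih
        _ = (adjoint P)^n * (adjoint P * (D * Y * D) * P) * P^n := by
            conv_lhs => rw [key]
        _ = (adjoint P)^(n+1) * (D * Y * D) * P^(n+1) := by
            rw [pow_succ, pow_succ']; noncomm_ring
  have hPz : ∀ z : H, ‖P z‖ ≤ ‖z‖ := fun z =>
    (P.le_opNorm z).trans (by nlinarith [norm_nonneg z])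
  have hDn : ∀ z : H, ‖D z‖^2 = ‖z‖^2 - ‖P z‖^2 := by
    intro z
    have h1 : (⟪D z, D z⟫_ℂ) = ⟪z, z⟫_ℂ - ⟪P z, P z⟫_ℂ := by
      rw [← hDsa, adjoint_inner_left, hDsa]
      have hz : D (D z) = z - adjoint P (P z) := by
        have := congrFun (congrArg DFunLike.coe hD) z
        simpa [mul_apply, sub_apply, one_apply] using this
      rw [hz, inner_sub_right, adjoint_inner_right]
    rw [inner_self_eq_norm_sq_to_K, inner_self_eq_norm_sq_to_K,
      inner_self_eq_norm_sq_to_K] at h1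
    exact_mod_cast h1
  -- norm of powers of adjoint P
  have hpow : ∀ n : ℕ, ‖(adjoint P)^n‖ ≤ 1 := by
    have hPa : ‖adjoint P‖ ≤ 1 := by rwa [LinearIsometryEquiv.norm_map (adjoint : (H →L[ℂ] H) ≃ₗᵢ⋆[ℂ] (H →L[ℂ] H)) P]
    intro n
    induction n with
    | zero => rw [pow_zero]; exact norm_id_le (𝕜 := ℂ) (E := H)
    | succ n ih =>
      rw [pow_succ]
      exact (norm_mul_le _ _).trans (by nlinarith [norm_nonneg ((adjoint P)^n)])
  ext x
  simp only [zero_apply]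
  rw [← norm_eq_zero]
  set c := ‖(D * Y * D) x‖ with hc
  -- the sequence ‖Pⁿ x‖² is antitone and bounded below, hence converges
  have hsucc : ∀ n : ℕ, ‖(P^(n+1)) x‖ ≤ ‖(P^n) x‖ := by
    intro n; rw [pow_succ', ContinuousLinearMap.mul_apply]; exact hPz _
  have hanti : Antitone (fun n : ℕ => ‖(P^n) x‖^2) := by
    apply antitone_nat_of_succ_le
    intro n
    have := hsucc n
    nlinarith [norm_nonneg ((P^(n+1)) x)]
  have hbdd : BddBelow (Set.range fun n : ℕ => ‖(P^n) x‖^2) := by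
    refine ⟨0, ?_⟩; rintro y ⟨n, rfl⟩; positivity
  have hconv := tendsto_atTop_ciInf hanti hbdd
  have hconv1 : Filter.Tendsto (fun n : ℕ => ‖(P^(n+1)) x‖^2) Filter.atTop
      (nhds (⨅ n : ℕ, ‖(P^n) x‖^2)) := hconv.comp (Filter.tendsto_add_atTop_nat 1)
  have hdiff : Filter.Tendsto (fun n : ℕ => ‖(P^n) x‖^2 - ‖(P^(n+1)) x‖^2)
      Filter.atTop (nhds 0) := by
    simpa using hconv.sub hconv1
  have hf2 : Filter.Tendsto (fun n : ℕ => ‖D ((P^n) x)‖^2) Filter.atTop (nhds 0) := by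
    have heq : (fun n : ℕ => ‖D ((P^n) x)‖^2)
        = fun n : ℕ => ‖(P^n) x‖^2 - ‖(P^(n+1)) x‖^2 := by
      funext n
      have hx : (P^(n+1)) x = P ((P^n) x) := by rw [pow_succ', ContinuousLinearMap.mul_apply]
      rw [hDn, hx]
    rw [heq]; exact hdiff
  have hf : Filter.Tendsto (fun n : ℕ => ‖D ((P^n) x)‖) Filter.atTop (nhds 0) := by
    have := hf2.sqrt
    simpa [Real.sqrt_sq (norm_nonneg _)] using this
  have bound : ∀ n : ℕ, c ≤ ‖D * Y‖ * ‖D ((P^n) x)‖ := by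
    intro n
    rw [hc]
    conv_lhs => rw [keyn n]
    calc ‖((adjoint P)^n * (D * Y * D) * P^n) x‖
        = ‖((adjoint P)^n) ((D * Y) (D ((P^n) x)))‖ := by simp [mul_apply]
      _ ≤ ‖(adjoint P)^n‖ * ‖(D * Y) (D ((P^n) x))‖ := le_opNorm _ _
      _ ≤ 1 * (‖D * Y‖ * ‖D ((P^n) x)‖) := by
          apply mul_le_mul (hpow n) (le_opNorm _ _) (norm_nonneg _) zero_le_one
      _ = ‖D * Y‖ * ‖D ((P^n) x)‖ := one_mul _
  have hlim : Filter.Tendsto (fun n : ℕ => ‖D * Y‖ * ‖D ((P^n) x)‖) Filter.atTop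
      (nhds 0) := by simpa using hf.const_mul ‖D * Y‖
  have hc0 : c ≤ 0 := ge_of_tendsto' hlim bound
  exact le_antisymm hc0 (norm_nonneg _)
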